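/- Let K = ℚ(√m) be a quadratic field and let η ∈ K^× be an element that is not a root of unity and satisfies N_{K/ℚ}(η) = ±1. Then there exists a bound B such that for every prime p > B that is inert in K/ℚ and prime to η, the order o_p(η) of η modulo p does not divide p − 1. -/

import Mathlib

open NumberField Polynomial
open scoped IntermediateField

/-- `x ≡ y (mod I)` for `x : K`, `y : 𝓞 K`: `x` can be written as a fraction `a/b`
with `b` invertible mod `I` and `a ≡ y·b (mod I)`. -/
def CongMod (K : Type) [Field K] [NumberField K] (I : Ideal (𝓞 K)) (x : K) (y : 𝓞 K) : Prop :=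
  ∃ a b : 𝓞 K, IsUnit (Ideal.Quotient.mk I b) ∧
    algebraMap (𝓞 K) K a = x * algebraMap (𝓞 K) K b ∧
    Ideal.Quotient.mk I a = Ideal.Quotient.mk I (y * b)

/-- `η ∈ K^×` is a unit at every prime of `K` above `p`:
it is a quotient of two integers of `K` that are invertible modulo `p`. -/
def PrimeTo (K : Type) [Field K] [NumberField K] (p : ℕ) (η : K) : Prop :=
  ∃ a b : 𝓞 K,
    IsUnit (Ideal.Quotient.mk (Ideal.span {(p : 𝓞 K)}) a) ∧
    IsUnit (Ideal.Quotient.mk (Ideal.span {(p : 𝓞 K)}) b) ∧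
    algebraMap (𝓞 K) K a = η * algebraMap (𝓞 K) K b

/-- The set of integers `k ≥ 1` with `η^k ≡ 1 (mod I)`; its least element
is the order of `η` modulo `I`. -/
def OrderSet (K : Type) [Field K] [NumberField K] (I : Ideal (𝓞 K)) (η : K) : Set ℕ :=
  {k : ℕ | 0 < k ∧ CongMod K I (η ^ k) 1}

/-- `s` is the Frobenius of `𝔭` over `p`: `s x ≡ x^p (mod 𝔭)` for every integer `x` of `K`. -/
def IsFrob (K : Type) [Field K] [NumberField K] (p : ℕ)
    (𝔭 : Ideal (𝓞 K)) (s : K ≃ₐ[ℚ] K) : Prop :=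
  ∀ x : 𝓞 K, galRestrict ℤ ℚ K (𝓞 K) s x - x ^ p ∈ 𝔭

set_option maxHeartbeats 8000000 in
set_option synthInstance.maxHeartbeats 400000 in
/-- in a quadratic field, if `η` is not a root of unity and has norm `±1`,
then for all inert `p ≫ 0` prime to `η`, the order `o_p(η)` does not divide `p - 1`. -/
theorem statement_8
    (K : Type) [Field K] [NumberField K]
    (hquad : Module.finrank ℚ K = 2)
    (η : K) (hη0 : η ≠ 0)
    (hηroot : ¬ ∃ m : ℕ, 0 < m ∧ η ^ m = 1)
    (hnorm : Algebra.norm ℚ η = 1 ∨ Algebra.norm ℚ η = -1) :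
    ∃ B : ℕ, ∀ p : ℕ, p.Prime → B < p →
      (Ideal.span {(p : 𝓞 K)}).IsPrime →
      PrimeTo K p η →
      ∀ k : ℕ, IsLeast (OrderSet K (Ideal.span {(p : 𝓞 K)}) η) k → ¬ (k ∣ p - 1) := by
  classical
  have hfr : Module.finrank ℤ (𝓞 K) = 2 := by
    rw [RingOfIntegers.rank, hquad]
  have hinj : Function.Injective (algebraMap (𝓞 K) K) := IsFractionRing.injective _ _
  have hnormInt : ∀ n : ℤ, Algebra.norm ℤ ((n : 𝓞 K)) = n ^ 2 := by
    intro n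
    have hcd : Fintype.card (Module.Free.ChooseBasisIndex ℤ (𝓞 K)) = 2 := by
      rw [← Module.finrank_eq_card_chooseBasisIndex, hfr]
    have h := Algebra.norm_algebraMap_of_basis (Module.Free.chooseBasis ℤ (𝓞 K)) n
    rw [hcd] at h
    rwa [show ((n : 𝓞 K)) = algebraMap ℤ (𝓞 K) n from (map_intCast _ n).symm]
  have hηirr : ∀ r : ℚ, algebraMap ℚ K r ≠ η := by
    intro r hr
    have hn : Algebra.norm ℚ (algebraMap ℚ K r) = r ^ 2 := by
      rw [Algebra.norm_algebraMap, hquad]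
    rw [hr] at hn
    have hr2 : r ^ 2 = 1 := by
      rcases hnorm with h | h
      · rw [h] at hn; exact hn.symm
      · rw [h] at hn; nlinarith [sq_nonneg r]
    exact hηroot ⟨2, two_pos, by rw [← hr, ← map_pow, hr2, map_one]⟩
  have halg : IsAlgebraic ℤ η := by
    rw [IsFractionRing.isAlgebraic_iff ℤ ℚ K]
    exact Algebra.IsAlgebraic.isAlgebraic η
  obtain ⟨x, D, hD0, hxD⟩ : ∃ x : integralClosure ℤ K, ∃ D ≠ (0 : ℤ),
      η * algebraMap ℤ K D = x := by
    obtain ⟨D, hD0, hint⟩ := halg.exists_integral_multiple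
    exact ⟨⟨D • η, hint⟩, D, hD0, by simp [zsmul_eq_mul, mul_comm]⟩
  obtain ⟨θ, hθ⟩ := IsIntegralClosure.isIntegral_iff (A := 𝓞 K).mp x.2
  have hθη : algebraMap (𝓞 K) K θ = (D : K) * η := by
    rw [hθ]
    rw [← hxD, algebraMap_int_eq, eq_intCast, mul_comm]
  set θ' : K := algebraMap (𝓞 K) K θ with hθ'
  have hθirr : ∀ r : ℚ, algebraMap ℚ K r ≠ θ' := by
    intro r hr
    apply hηirr (r / D)
    have hDK : (D : K) ≠ 0 := Int.cast_ne_zero.mpr hD0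
    rw [map_div₀, hr, hθη]
    field_simp
    rw [map_intCast, div_self hDK]
  have hintQ : IsIntegral ℚ θ' := IsIntegral.of_finite ℚ _
  have hintZ : IsIntegral ℤ θ' := θ.isIntegral_coe
  have hPdeg : (minpoly ℚ θ').natDegree = 2 := by
    have h1 : (minpoly ℚ θ').natDegree ≤ 2 := hquad ▸ minpoly.natDegree_le θ'
    have h3 : 0 < (minpoly ℚ θ').natDegree := minpoly.natDegree_pos hintQ
    have h2 : (minpoly ℚ θ').natDegree ≠ 1 := by
      intro h
      have := (minpoly.monic hintQ).eq_X_add_C h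
      have haev := minpoly.aeval ℚ θ'
      rw [this] at haev
      simp only [map_add, aeval_X, aeval_C] at haev
      exact hθirr (-(minpoly ℚ θ').coeff 0)
        (by rw [map_neg]; linear_combination -haev)
    omega
  -- integral minimal polynomial
  have hθZ : IsIntegral ℤ θ := RingOfIntegers.isIntegral θ
  have hmap : minpoly ℚ θ' = (minpoly ℤ θ).map (algebraMap ℤ ℚ) :=
    minpoly.isIntegrallyClosed_eq_field_fractions ℚ K hθZ
  have hPzmonic : (minpoly ℤ θ).Monic := minpoly.monic hθZ
  have hPzdeg : (minpoly ℤ θ).natDegree = 2 := by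
    rw [hmap, hPzmonic.natDegree_map] at hPdeg
    exact hPdeg
  set a1 : ℤ := (minpoly ℤ θ).coeff 1 with ha1
  set a0 : ℤ := (minpoly ℤ θ).coeff 0 with ha0
  have hrel : θ ^ 2 + (a1 : 𝓞 K) * θ + (a0 : 𝓞 K) = 0 := by
    have haev := minpoly.aeval ℤ θ
    rw [Polynomial.aeval_eq_sum_range, hPzdeg] at haev
    simp only [Finset.sum_range_succ, Finset.sum_range_zero] at haev
    have hlead : (minpoly ℤ θ).coeff 2 = 1 := by
      have := hPzmonic.coeff_natDegree
      rwa [hPzdeg] at this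
    rw [hlead] at haev
    simp only [zsmul_eq_mul, one_smul, pow_zero, pow_one, zero_add] at haev
    linear_combination haev
  -- power basis
  let pb0 := IntermediateField.adjoin.powerBasis hintQ
  have hfr1 : Module.finrank ℚ ℚ⟮θ'⟯ = Module.finrank ℚ K := by
    rw [IntermediateField.adjoin.finrank hintQ, hPdeg, hquad]
  have hTop : ℚ⟮θ'⟯ = ⊤ := by
    have hsub : Subalgebra.toSubmodule ℚ⟮θ'⟯.toSubalgebra = ⊤ :=
      Submodule.eq_top_of_finrank_eq (by simpa using hfr1)
    apply IntermediateField.toSubalgebra_injective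
    rw [IntermediateField.top_toSubalgebra]
    exact Algebra.toSubmodule_eq_top.mp hsub
  let eqv : ℚ⟮θ'⟯ ≃ₐ[ℚ] K := (IntermediateField.equivOfEq hTop).trans IntermediateField.topEquiv
  let pb : PowerBasis ℚ K := pb0.map eqv
  have hpbgen : pb.gen = θ' := by
    simp only [pb, PowerBasis.map_gen, pb0, IntermediateField.adjoin.powerBasis_gen]
    rfl
  have hpbdim : pb.dim = 2 := by
    have h := pb.finrank
    rw [hquad] at h
    omega
  have hnormθ : Algebra.norm ℚ θ' = (a0 : ℚ) := by
    have h := Algebra.PowerBasis.norm_gen_eq_coeff_zero_minpoly pb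
    rw [hpbgen, hpbdim] at h
    rw [h, hmap, Polynomial.coeff_map]
    simp [ha0]
  have ha0D : a0 = D ^ 2 ∨ a0 = -D ^ 2 := by
    have h2 : Algebra.norm ℚ θ' = (D : ℚ) ^ 2 * Algebra.norm ℚ η := by
      have : θ' = algebraMap ℚ K (D : ℚ) * η := by
        rw [hθη, map_intCast]
      rw [this, map_mul, Algebra.norm_algebraMap, hquad]
    rw [hnormθ] at h2
    rcases hnorm with h | h <;> rw [h] at h2
    · left; exact_mod_cast h2.trans (mul_one _)
    · right
      have : (a0 : ℚ) = -(D:ℚ)^2 := by rw [h2]; ring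
      exact_mod_cast this
  -- discriminant denominator
  have hpbint : IsIntegral ℤ pb.gen := hpbgen ▸ hintZ
  have hdiscint : IsIntegral ℤ (Algebra.discr ℚ pb.basis) := by
    apply Algebra.discr_isIntegral
    intro i
    rw [pb.basis_eq_pow]
    exact hpbint.pow _
  obtain ⟨e, he⟩ := IsIntegrallyClosed.isIntegral_iff.mp hdiscint
  have he0 : e ≠ 0 := by
    intro h
    apply Algebra.discr_not_zero_of_basis ℚ pb.basis
    rw [← he, h, map_zero]
  have hgen : ∀ z : 𝓞 K, (e : 𝓞 K) * z ∈ Algebra.adjoin ℤ ({θ} : Set (𝓞 K)) := by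
    intro z
    have hmem := Algebra.discr_mul_isIntegral_mem_adjoin ℚ hpbint
      (RingOfIntegers.isIntegral_coe z)
    rw [← he, hpbgen] at hmem
    have himg : Algebra.adjoin ℤ ({θ'} : Set K) =
        (Algebra.adjoin ℤ ({θ} : Set (𝓞 K))).map (IsScalarTower.toAlgHom ℤ (𝓞 K) K) := by
      rw [AlgHom.map_adjoin]
      congr 1
      simp [hθ']
    rw [himg] at hmem
    obtain ⟨w, hw, hweq⟩ := hmem
    have hwe : w = (e : 𝓞 K) * z := by
      apply hinj
      have hweq' : algebraMap (𝓞 K) K w = (algebraMap ℤ ℚ) e • (algebraMap (𝓞 K) K) z := hweq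
      show algebraMap (𝓞 K) K w = _
      rw [hweq', Algebra.smul_def, map_mul, map_intCast]
      congr 1
      simp
    rwa [← hwe]
  -- the element θ^4 - D^4 is nonzero
  have hγ40 : θ ^ 4 - (D : 𝓞 K) ^ 4 ≠ 0 := by
    intro h
    apply hηroot
    refine ⟨4, by norm_num, ?_⟩
    rw [sub_eq_zero] at h
    have h4 : algebraMap (𝓞 K) K (θ ^ 4) = algebraMap (𝓞 K) K ((D : 𝓞 K) ^ 4) := by rw [h]
    rw [map_pow, map_pow, map_intCast, ← hθ', hθη, mul_pow] at h4
    have hDK : (D : K) ≠ 0 := Int.cast_ne_zero.mpr hD0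
    have hD4 : (D : K) ^ 4 ≠ 0 := pow_ne_zero _ hDK
    calc η ^ 4 = ((D:K)^4)⁻¹ * ((D:K)^4 * η^4) := by field_simp
    _ = 1 := by rw [h4]; field_simp
  set B : ℕ := (Algebra.norm ℤ (θ ^ 4 - (D : 𝓞 K) ^ 4)).natAbs + D.natAbs + e.natAbs with hB
  refine ⟨B, ?_⟩
  intro p hp hBp hprime _hpt k hk hkdvd
  set I : Ideal (𝓞 K) := Ideal.span {((p : ℕ) : 𝓞 K)} with hI
  have hp2 : 2 ≤ p := hp.two_le
  have hpK0 : ((p : ℕ) : 𝓞 K) ≠ 0 := Nat.cast_ne_zero.mpr hp.pos.ne'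
  have hIbot : I ≠ ⊥ := by
    rw [hI, Ne, Ideal.span_singleton_eq_bot]; exact hpK0
  haveI hIp : I.IsPrime := hprime
  have hnp : Algebra.norm ℤ (((p : ℕ) : 𝓞 K)) = (p : ℤ) ^ 2 := by
    have hc : ((p : ℕ) : 𝓞 K) = ((((p : ℕ) : ℤ)) : 𝓞 K) := by norm_cast
    rw [hc, hnormInt]
  have hdvdnorm : ∀ γ : 𝓞 K, γ ∈ I → (p : ℤ) ^ 2 ∣ Algebra.norm ℤ γ := by
    intro γ hγ
    obtain ⟨z, hz⟩ := Ideal.mem_span_singleton.mp (hI ▸ hγ)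
    rw [hz, map_mul, hnp]
    exact Dvd.intro _ rfl
  have hmain : ∀ γ : 𝓞 K, γ ≠ 0 → (Algebra.norm ℤ γ).natAbs ≤ B → γ ∉ I := by
    intro γ hγ0 hle hγI
    have hN0 : Algebra.norm ℤ γ ≠ 0 := by
      rw [Algebra.norm_ne_zero_iff]; exact hγ0
    have hdvd := hdvdnorm γ hγI
    have hpd : (p : ℤ) ∣ Algebra.norm ℤ γ := dvd_trans (dvd_pow_self _ two_ne_zero) hdvd
    have hnd : p ∣ (Algebra.norm ℤ γ).natAbs := by
      rw [← Int.natAbs_natCast p]; exact Int.natAbs_dvd_natAbs.mpr hpd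
    have := Nat.le_of_dvd (Int.natAbs_pos.mpr hN0) hnd
    omega
  have hcastne : ∀ n : ℤ, n ≠ 0 → n.natAbs ≤ B → ((n : 𝓞 K ⧸ I)) ≠ 0 := by
    intro n hn0 hle h0
    have hmem : ((n : 𝓞 K)) ∈ I := by
      rw [← Ideal.Quotient.eq_zero_iff_mem,
        show Ideal.Quotient.mk I ((n : 𝓞 K)) = ((n : 𝓞 K ⧸ I)) from map_intCast _ n]
      exact h0
    have hd := hdvdnorm _ hmem
    rw [hnormInt n] at hd
    have hd2 : p ^ 2 ∣ n.natAbs ^ 2 := by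
      have h' := Int.natAbs_dvd_natAbs.mpr hd
      simpa [Int.natAbs_pow] using h'
    have hpd : p ∣ n.natAbs :=
      hp.dvd_of_dvd_pow (dvd_trans (dvd_pow_self p two_ne_zero) hd2)
    have := Nat.le_of_dvd (Int.natAbs_pos.mpr hn0) hpd
    omega
  haveI : Fact p.Prime := ⟨hp⟩
  have hpI : ((p : ℕ) : 𝓞 K) ∈ I := by
    rw [hI]; exact Ideal.mem_span_singleton_self _
  haveI hFchar : CharP (𝓞 K ⧸ I) p := by
    have hcast : ((p : ℕ) : 𝓞 K ⧸ I) = 0 := by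
      rw [← map_natCast (Ideal.Quotient.mk I)]
      exact Ideal.Quotient.eq_zero_iff_mem.mpr hpI
    have hdvd : ringChar (𝓞 K ⧸ I) ∣ p := ringChar.dvd hcast
    rcases hp.eq_one_or_self_of_dvd _ hdvd with h1 | hpp
    · exact absurd h1 CharP.ringChar_ne_one
    · rw [← hpp]; exact ringChar.charP _
  have hFermat : ∀ n : ℤ, ((n : 𝓞 K ⧸ I)) ^ p = ((n : 𝓞 K ⧸ I)) := by
    intro n
    have h' := map_intCast (frobenius (𝓞 K ⧸ I) p) n
    rwa [frobenius_def] at h'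
  -- extract the order information
  set t : 𝓞 K ⧸ I := Ideal.Quotient.mk I θ with ht
  obtain ⟨hkpos, hcong⟩ := hk.1
  obtain ⟨a, b, hbu, habK, habI⟩ := hcong
  have hab2 : a * (D : 𝓞 K) ^ k = θ ^ k * b := by
    apply hinj
    rw [map_mul, map_mul, map_pow, map_pow, map_intCast, habK, ← hθ', hθη]
    ring
  have hmkab : Ideal.Quotient.mk I a = Ideal.Quotient.mk I b := by rw [habI, one_mul]
  have hDθk : ((D : 𝓞 K ⧸ I)) ^ k = t ^ k := by
    have h1 := congrArg (Ideal.Quotient.mk I) hab2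
    rw [map_mul, map_mul, map_pow, map_pow, map_intCast, hmkab, ← ht] at h1
    have h2 : Ideal.Quotient.mk I b * ((D : 𝓞 K ⧸ I)) ^ k
        = Ideal.Quotient.mk I b * t ^ k := by rw [h1, mul_comm]
    exact hbu.mul_left_cancel h2
  obtain ⟨m, hm⟩ := hkdvd
  have hDθ : t ^ (p - 1) = ((D : 𝓞 K ⧸ I)) ^ (p - 1) := by
    rw [hm, pow_mul, pow_mul, hDθk]
  -- residue quadratic relation
  have hrelF : t ^ 2 + (a1 : 𝓞 K ⧸ I) * t + (a0 : 𝓞 K ⧸ I) = 0 := by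
    have h' := congrArg (Ideal.Quotient.mk I) hrel
    simpa only [map_add, map_mul, map_pow, map_intCast, map_zero, ← ht] using h'
  have hroot : (t ^ p) ^ 2 + (a1 : 𝓞 K ⧸ I) * (t ^ p) + (a0 : 𝓞 K ⧸ I) = 0 := by
    have h' := congrArg (frobenius (𝓞 K ⧸ I) p) hrelF
    simp only [map_add, map_mul, map_pow, map_zero, map_intCast, frobenius_def] at h'
    linear_combination h'
  have hdich : t ^ p = t ∨ t ^ p = -(a1 : 𝓞 K ⧸ I) - t := by
    have hfact : (t ^ p - t) * (t ^ p + (a1 : 𝓞 K ⧸ I) + t) = 0 := by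
      linear_combination hroot - hrelF
    rcases mul_eq_zero.mp hfact with h | h
    · left; exact sub_eq_zero.mp h
    · right; linear_combination h
  rcases hdich with hbad | hgood
  · -- bad case: the Frobenius fixes everything, contradiction with cardinality
    exfalso
    have heF : ((e : 𝓞 K ⧸ I)) ≠ 0 := hcastne e he0 (by omega)
    set S : Subring (𝓞 K ⧸ I) :=
      RingHom.eqLocus (frobenius (𝓞 K ⧸ I) p) (RingHom.id (𝓞 K ⧸ I)) with hS
    have hmemS : ∀ x : 𝓞 K ⧸ I, x ∈ S ↔ x ^ p = x := fun x => Iff.rfl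
    have hθS : t ∈ S := (hmemS t).mpr hbad
    have hadj : Subring.closure
        (Set.range (algebraMap ℤ (𝓞 K)) ∪ ({θ} : Set (𝓞 K)))
        ≤ S.comap (Ideal.Quotient.mk I) := by
      rw [Subring.closure_le]
      rintro y (⟨n, rfl⟩ | hy)
      · show Ideal.Quotient.mk I (algebraMap ℤ (𝓞 K) n) ∈ S
        rw [hmemS]
        have hc : Ideal.Quotient.mk I (algebraMap ℤ (𝓞 K) n) = ((n : 𝓞 K ⧸ I)) := by
          rw [show algebraMap ℤ (𝓞 K) n = ((n : 𝓞 K)) from map_intCast _ n, map_intCast]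
        rw [hc]
        exact hFermat n
      · rw [Set.mem_singleton_iff] at hy
        subst hy
        exact hθS
    have hall : ∀ x : 𝓞 K ⧸ I, x ^ p = x := by
      intro x
      obtain ⟨z, rfl⟩ := Ideal.Quotient.mk_surjective x
      have h0 : (e : 𝓞 K) * z ∈ Subring.closure
          (Set.range (algebraMap ℤ (𝓞 K)) ∪ ({θ} : Set (𝓞 K))) := by
        have := hgen z
        rwa [Algebra.mem_adjoin_iff] at this
      have h1 : Ideal.Quotient.mk I ((e : 𝓞 K) * z) ∈ S := hadj h0
      rw [hmemS, map_mul, map_intCast, mul_pow, hFermat e] at h1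
      exact mul_left_cancel₀ heF h1
    have hcard : Nat.card (𝓞 K ⧸ I) = p ^ 2 := by
      have h1 : Ideal.absNorm I = ((p : ℤ) ^ 2).natAbs := by
        rw [hI, Ideal.absNorm_span_singleton, hnp]
      rw [Ideal.absNorm_apply, Submodule.cardQuot_apply] at h1
      simpa using h1
    haveI : Finite (𝓞 K ⧸ I) := Nat.finite_of_card_ne_zero (by rw [hcard]; positivity)
    letI : Fintype (𝓞 K ⧸ I) := Fintype.ofFinite _
    have hQd : ((X : (𝓞 K ⧸ I)[X]) ^ p - X).natDegree = p := by
      rw [natDegree_sub_eq_left_of_natDegree_lt] <;>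
        rw [natDegree_X_pow] <;> try rw [natDegree_X]
      omega
    have hQ0 : ((X : (𝓞 K ⧸ I)[X]) ^ p - X) ≠ 0 := by
      intro h'
      rw [h'] at hQd
      simp at hQd
      omega
    have hsub : (Finset.univ : Finset (𝓞 K ⧸ I))
        ⊆ ((X : (𝓞 K ⧸ I)[X]) ^ p - X).roots.toFinset := by
      intro x _
      rw [Multiset.mem_toFinset, mem_roots hQ0]
      simp [IsRoot, hall x]
    have hle : Fintype.card (𝓞 K ⧸ I) ≤ p := by
      calc Fintype.card (𝓞 K ⧸ I) = (Finset.univ : Finset (𝓞 K ⧸ I)).card :=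
            Finset.card_univ.symm
        _ ≤ ((X : (𝓞 K ⧸ I)[X]) ^ p - X).roots.toFinset.card := Finset.card_le_card hsub
        _ ≤ Multiset.card ((X : (𝓞 K ⧸ I)[X]) ^ p - X).roots := Multiset.toFinset_card_le _
        _ ≤ ((X : (𝓞 K ⧸ I)[X]) ^ p - X).natDegree := card_roots' _
        _ = p := hQd
    rw [← Nat.card_eq_fintype_card, hcard] at hle
    nlinarith
  · -- good case: θ^4 ≡ D^4 mod p, contradiction with the bound
    have hDF : ((D : 𝓞 K ⧸ I)) ≠ 0 := hcastne D hD0 (by omega)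
    have h1 : t ^ (p + 1) = (a0 : 𝓞 K ⧸ I) := by
      rw [pow_succ, hgood]
      linear_combination -hrelF
    have h2 : t ^ (p + 1) = ((D : 𝓞 K ⧸ I)) ^ (p - 1) * t ^ 2 := by
      rw [show p + 1 = (p - 1) + 2 by omega, pow_add, hDθ]
    have hDp1 : ((D : 𝓞 K ⧸ I)) ^ (p + 1) = ((D : 𝓞 K ⧸ I)) ^ 2 := by
      rw [pow_succ, hFermat D, sq]
    have h4 : (a0 : 𝓞 K ⧸ I) * ((D : 𝓞 K ⧸ I)) ^ 2 = ((D : 𝓞 K ⧸ I)) ^ 2 * t ^ 2 := by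
      have e1 : (a0 : 𝓞 K ⧸ I) * ((D : 𝓞 K ⧸ I)) ^ 2
          = (((D : 𝓞 K ⧸ I)) ^ (p - 1) * t ^ 2) * ((D : 𝓞 K ⧸ I)) ^ 2 := by
        rw [← h2, h1]
      have e2 : ((D : 𝓞 K ⧸ I)) ^ (p - 1) * ((D : 𝓞 K ⧸ I)) ^ 2
          = ((D : 𝓞 K ⧸ I)) ^ (p + 1) := by
        rw [← pow_add]; congr 1; omega
      calc (a0 : 𝓞 K ⧸ I) * ((D : 𝓞 K ⧸ I)) ^ 2
          = (((D : 𝓞 K ⧸ I)) ^ (p - 1) * ((D : 𝓞 K ⧸ I)) ^ 2) * t ^ 2 := by rw [e1]; ring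
        _ = ((D : 𝓞 K ⧸ I)) ^ (p + 1) * t ^ 2 := by rw [e2]
        _ = ((D : 𝓞 K ⧸ I)) ^ 2 * t ^ 2 := by rw [hDp1]
    have ha0sq : a0 * a0 = D ^ 4 := by rcases ha0D with h | h <;> rw [h] <;> ring
    have h5 : t ^ 4 = ((D : 𝓞 K ⧸ I)) ^ 4 := by
      have h7 : (a0 : 𝓞 K ⧸ I) * (a0 : 𝓞 K ⧸ I) = ((D : 𝓞 K ⧸ I)) ^ 4 := by
        have hc : ((a0 * a0 : ℤ) : 𝓞 K ⧸ I) = ((D ^ 4 : ℤ) : 𝓞 K ⧸ I) := by rw [ha0sq]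
        push_cast at hc
        exact hc
      apply mul_left_cancel₀ (pow_ne_zero 4 hDF)
      calc ((D : 𝓞 K ⧸ I)) ^ 4 * t ^ 4
          = (((D : 𝓞 K ⧸ I)) ^ 2 * t ^ 2) * (((D : 𝓞 K ⧸ I)) ^ 2 * t ^ 2) := by ring
        _ = ((a0 : 𝓞 K ⧸ I) * ((D : 𝓞 K ⧸ I)) ^ 2) * ((a0 : 𝓞 K ⧸ I) * ((D : 𝓞 K ⧸ I)) ^ 2) := by
            rw [h4]
        _ = ((a0 : 𝓞 K ⧸ I) * (a0 : 𝓞 K ⧸ I)) * ((D : 𝓞 K ⧸ I)) ^ 4 := by ring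
        _ = ((D : 𝓞 K ⧸ I)) ^ 4 * ((D : 𝓞 K ⧸ I)) ^ 4 := by rw [h7]
    have hmem4 : θ ^ 4 - (D : 𝓞 K) ^ 4 ∈ I := by
      rw [← Ideal.Quotient.eq_zero_iff_mem, map_sub, map_pow, map_pow, map_intCast, ← ht,
        h5, sub_self]
    exact hmain _ hγ40 (by rw [hB]; omega) hmem4
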